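/- For every integer n ≥ 2 and every rational number d, the identity Σ_{k=0}^{n-1} (-1)^{n+k+1} · C(n-1,k) · binom(kd, n+1) = ((3n−2)d − (3n+2))/24 · d^{n-1}·(d−1)·(n−1) holds, i.e., the quantity A_1 from the Euler characteristic computation of a complete intersection surface has the stated closed form. -/

import Mathlib

open Finset Polynomial fwdDiff

noncomputable def W (m j : ℕ) : ℚ := (fwdDiff (1:ℚ))^[m] (fun x : ℚ ↦ x ^ j) 0

lemma fwdDiff_pow (j : ℕ) :
    fwdDiff (1:ℚ) (fun x : ℚ ↦ x ^ j) = ∑ t ∈ range j, (j.choose t : ℚ) • (fun x : ℚ ↦ x ^ t) := by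
  ext x
  have h := add_pow x (1:ℚ) j
  simp only [one_pow, mul_one] at h
  rw [Finset.sum_apply]
  simp only [Pi.smul_apply, smul_eq_mul, fwdDiff]
  rw [h, Finset.sum_range_succ]
  simp [mul_comm]

lemma Wrec (m j : ℕ) : W (m+1) j = ∑ t ∈ range j, (j.choose t : ℚ) * W m t := by
  unfold W
  rw [Function.iterate_succ_apply, fwdDiff_pow, fwdDiff_iter_finset_sum]
  rw [Finset.sum_apply]
  congr 1; ext t
  rw [fwdDiff_iter_const_smul]
  simp [W]

lemma Wlow : ∀ m j, j < m → W m j = 0 := by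
  intro m
  induction m with
  | zero => intro j h; omega
  | succ m IH =>
    intro j hj
    rw [Wrec]
    apply Finset.sum_eq_zero
    intro t ht
    rw [IH t (by simp at ht; omega)]
    ring

lemma Wm : ∀ m, W m m = m.factorial := by
  intro m
  induction m with
  | zero => simp [W]
  | succ m IH =>
    rw [Wrec, Finset.sum_range_succ]
    rw [Finset.sum_eq_zero (fun t ht => by rw [Wlow m t (by simp at ht; omega)]; ring)]
    rw [IH]
    simp [Nat.factorial_succ, Nat.choose_succ_self_right]

lemma choose2 : ∀ N : ℕ, ((N+2).choose 2 : ℚ) = (N+1)*(N+2)/2 := by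
  intro N
  induction N with
  | zero => norm_num
  | succ N IH =>
    rw [show N+1+2 = (N+2)+1 from rfl, Nat.choose_succ_succ (N+2) 1]
    push_cast [IH]
    simp [Nat.choose_one_right]
    ring

lemma choose3 : ∀ N : ℕ, ((N+3).choose 3 : ℚ) = (N+1)*(N+2)*(N+3)/6 := by
  intro N
  induction N with
  | zero => norm_num
  | succ N IH =>
    rw [show N+1+3 = (N+3)+1 from rfl, Nat.choose_succ_succ (N+3) 2]
    push_cast [IH, choose2 (N+1)]
    ring

lemma chooseback1 (N : ℕ) : ((N+1).choose N : ℚ) = N+1 := by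
  rw [Nat.choose_succ_self_right]; push_cast; ring

lemma chooseback2 (N : ℕ) : ((N+2).choose N : ℚ) = (N+1)*(N+2)/2 := by
  rw [← Nat.choose_symm (show N ≤ N+2 by omega), show (N+2) - N = 2 from by omega, choose2]

lemma chooseback3 (N : ℕ) : ((N+3).choose N : ℚ) = (N+1)*(N+2)*(N+3)/6 := by
  rw [← Nat.choose_symm (show N ≤ N+3 by omega), show (N+3) - N = 3 from by omega, choose3]

lemma Wm1 : ∀ m, W m (m+1) = m.factorial * m * (m+1) / 2 := by
  intro m
  induction m with
  | zero => simp [W]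
  | succ m IH =>
    rw [Wrec, Finset.sum_range_succ, Finset.sum_range_succ]
    rw [Finset.sum_eq_zero (fun t ht => by rw [Wlow m t (by simp at ht; omega)]; ring)]
    rw [IH, Wm]
    rw [chooseback2, show m+2 = (m+1)+1 from rfl, chooseback1]
    push_cast [Nat.factorial_succ]
    ring

lemma Wm2 : ∀ m, W m (m+2) = m.factorial * m * (m+1) * (m+2) * (3*m+1) / 24 := by
  intro m
  induction m with
  | zero => simp [W]
  | succ m IH =>
    rw [Wrec, Finset.sum_range_succ, Finset.sum_range_succ, Finset.sum_range_succ]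
    rw [Finset.sum_eq_zero (fun t ht => by rw [Wlow m t (by simp at ht; omega)]; ring)]
    rw [IH, Wm1, Wm]
    rw [show m+1+2 = m+3 from rfl, chooseback3, show m+3 = (m+1)+2 from rfl, chooseback2,
      show (m+1)+2 = (m+2)+1 from rfl, chooseback1]
    push_cast [Nat.factorial_succ]
    ring

noncomputable def q (d : ℚ) (m : ℕ) : Polynomial ℚ := ∏ i ∈ range m, (C d * X - C (i:ℚ))

lemma qdeg (d : ℚ) (m : ℕ) : (q d m).natDegree ≤ m := by
  unfold q
  refine le_trans (Polynomial.natDegree_prod_le _ _) ?_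
  calc ∑ i ∈ range m, (C d * X - C (i:ℚ)).natDegree ≤ ∑ i ∈ range m, 1 := by
        apply Finset.sum_le_sum
        intro i _
        have : C d * X - C (i:ℚ) = C d * X + C (-(i:ℚ)) := by rw [map_neg]; ring
        rw [this]
        exact Polynomial.natDegree_linear_le
    _ = m := by simp

lemma qcoeff_zero (d : ℚ) (m j : ℕ) (h : m < j) : (q d m).coeff j = 0 :=
  Polynomial.coeff_eq_zero_of_natDegree_lt (lt_of_le_of_lt (qdeg d m) h)

lemma qeval (d : ℚ) (m : ℕ) (x : ℚ) : (q d m).eval x = ∏ i ∈ range m, (x * d - i) := by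
  unfold q
  rw [Polynomial.eval_prod]
  apply Finset.prod_congr rfl
  intro i _
  simp only [Polynomial.eval_sub, Polynomial.eval_mul, Polynomial.eval_C, Polynomial.eval_X]
  ring

lemma qstep (d : ℚ) (m j : ℕ) :
    (q d (m+1)).coeff (j+1) = d * (q d m).coeff j - m * (q d m).coeff (j+1) := by
  unfold q
  rw [Finset.prod_range_succ]
  have : (∏ i ∈ range m, (C d * X - C (i:ℚ))) * (C d * X - C (m:ℚ))
      = ((∏ i ∈ range m, (C d * X - C (i:ℚ))) * C d) * X
        - (∏ i ∈ range m, (C d * X - C (i:ℚ))) * C (m:ℚ) := by ring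
  rw [this, Polynomial.coeff_sub, Polynomial.coeff_mul_X, Polynomial.coeff_mul_C,
    Polynomial.coeff_mul_C]
  ring

lemma ctop (d : ℚ) : ∀ m, (q d m).coeff m = d ^ m := by
  intro m
  induction m with
  | zero => simp [q]
  | succ m IH =>
    rw [qstep, IH, qcoeff_zero d m (m+1) (by omega)]
    ring

lemma c1 (d : ℚ) : ∀ m, (q d (m+1)).coeff m = -d ^ m * (m * (m+1) / 2) := by
  intro m
  induction m with
  | zero => simp [q]
  | succ m IH =>
    rw [qstep, IH, ctop]
    push_cast
    ring

lemma c2 (d : ℚ) : ∀ m, (q d (m+2)).coeff m = d ^ m * (m * (m+1) * (m+2) * (3*m+5) / 24) := by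
  intro m
  induction m with
  | zero =>
    rw [Polynomial.coeff_zero_eq_eval_zero, qeval]
    norm_num [Finset.prod_range_succ]
  | succ m IH =>
    rw [show m+1+2 = (m+2)+1 from rfl]
    rw [qstep, IH, show m+2 = (m+1)+1 from rfl, c1]
    push_cast
    ring

/-- The generalized binomial coefficient `binom(x, n) = x(x-1)⋯(x-n+1)/n!` for `x : ℚ`. -/
def gbinom (x : ℚ) (n : ℕ) : ℚ :=
  (∏ i ∈ Finset.range n, (x - i)) / (n.factorial : ℚ)

theorem A1_closed_form (n : ℕ) (hn : 2 ≤ n) (d : ℚ) :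
    ∑ k ∈ Finset.range n,
        (-1) ^ (n + k + 1) * ((n - 1).choose k : ℚ) * gbinom ((k : ℚ) * d) (n + 1)
      = ((3 * (n : ℚ) - 2) * d - (3 * (n : ℚ) + 2)) / 24
          * d ^ (n - 1) * (d - 1) * ((n : ℚ) - 1) := by
  obtain ⟨s, rfl⟩ : ∃ s, n = s + 2 := ⟨n - 2, by omega⟩
  -- the function whose iterated forward difference is the LHS
  set F : ℚ → ℚ := fun x ↦ (((s+3).factorial : ℚ))⁻¹ * (q d (s+3)).eval x with hF
  have hfact : (((s+3).factorial : ℚ)) ≠ 0 := by positivity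
  -- Step 1: LHS equals the (s+1)-th forward difference of F at 0
  have step1 : ∑ k ∈ Finset.range (s+2),
      (-1) ^ (s+2 + k + 1) * ((s+2 - 1).choose k : ℚ) * gbinom ((k : ℚ) * d) (s+2 + 1)
      = (fwdDiff (1:ℚ))^[s+1] F 0 := by
    rw [fwdDiff_iter_eq_sum_shift]
    apply Finset.sum_congr rfl
    intro k hk
    have hk' : k ≤ s + 1 := by simpa using Nat.lt_succ_iff.mp (Finset.mem_range.mp hk)
    have hsign : ((-1:ℚ)) ^ (s+2+k+1) = (-1:ℚ) ^ (s+1-k) := by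
      have : s+2+k+1 = (s+1-k) + 2*(k+1) := by omega
      rw [this, pow_add, pow_mul]
      norm_num
    rw [zsmul_eq_mul]
    push_cast
    simp only [hF, zero_add, nsmul_eq_mul, mul_one]
    rw [qeval]
    rw [gbinom]
    rw [show s+2+1 = s+3 from rfl, hsign]
    field_simp
  rw [step1]
  -- Step 2: compute the forward difference via monomial expansion
  have hdeg : (q d (s+3)).natDegree < s + 4 := lt_of_le_of_lt (qdeg d (s+3)) (by omega)
  have hGsum : F = ∑ j ∈ Finset.range (s+4),
      ((((s+3).factorial : ℚ))⁻¹ * (q d (s+3)).coeff j) • (fun x : ℚ ↦ x ^ j) := by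
    ext x
    simp only [hF, Finset.sum_apply, Pi.smul_apply, smul_eq_mul]
    rw [Polynomial.eval_eq_sum_range' hdeg x, Finset.mul_sum]
    exact Finset.sum_congr rfl (fun j _ => by ring)
  have step2 : (fwdDiff (1:ℚ))^[s+1] F 0
      = ∑ j ∈ Finset.range (s+4),
          (((s+3).factorial : ℚ))⁻¹ * (q d (s+3)).coeff j * W (s+1) j := by
    rw [hGsum, fwdDiff_iter_finset_sum]
    rw [Finset.sum_apply]
    apply Finset.sum_congr rfl
    intro j _
    rw [fwdDiff_iter_const_smul]
    simp [W, mul_assoc]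
  rw [step2]
  -- Step 3: only top three coefficients survive
  rw [show s+4 = (s+1)+1+1+1 from rfl, Finset.sum_range_succ, Finset.sum_range_succ,
    Finset.sum_range_succ]
  rw [Finset.sum_eq_zero (fun j hj => by
    rw [Wlow (s+1) j (Finset.mem_range.mp hj)]; ring)]
  rw [show (s+1)+1 = s+2 from rfl, show (s+2)+1 = s+3 from rfl]
  rw [Wm (s+1), show s+3 = (s+1)+2 from rfl, Wm2 (s+1), show (s+1)+2 = (s+2)+1 from rfl,
    show (s+2) = (s+1)+1 from rfl, Wm1 (s+1)]
  rw [show ((s+1)+1)+1 = (s+1)+2 from rfl] at *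
  rw [c2 d (s+1), ctop d ((s+1)+2), c1 d ((s+1)+1)]
  -- Step 4: final algebra
  have hfac3 : (((s+3).factorial : ℚ)) = (s+3) * (s+2) * ((s+1).factorial : ℚ) := by
    rw [show s+3 = (s+2)+1 from rfl, Nat.factorial_succ, show s+2 = (s+1)+1 from rfl,
      Nat.factorial_succ]
    push_cast
    ring
  have hfact1 : (((s+1).factorial : ℚ)) ≠ 0 := by positivity
  rw [hfac3]
  push_cast
  field_simp
  ring
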